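/- The entropy Jacobian H of the ideal MHD system is symmetric positive definite: for every ideal MHD state with ρ > 0, p > 0, and γ > 1, the 8×8 matrix H defined below is symmetric, and xᵀHx > 0 for every nonzero x ∈ ℝ⁸. -/

import Mathlib

open Real Matrix

/-- An ideal MHD state: density, velocity components, pressure, magnetic field components. -/
structure MHD where
  ρ : ℝ
  u : ℝ
  v : ℝ
  w : ℝ
  p : ℝ
  B1 : ℝ
  B2 : ℝ
  B3 : ℝ

namespace MHD

noncomputable section

/-- ‖u⃗‖² -/
def uSq (S : MHD) : ℝ := S.u ^ 2 + S.v ^ 2 + S.w ^ 2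

/-- ‖B⃗‖² -/
def BSq (S : MHD) : ℝ := S.B1 ^ 2 + S.B2 ^ 2 + S.B3 ^ 2

/-- u⃗·B⃗ -/
def uDotB (S : MHD) : ℝ := S.u * S.B1 + S.v * S.B2 + S.w * S.B3

/-- physical entropy s = ln p − γ ln ρ -/
def ent (γ : ℝ) (S : MHD) : ℝ := Real.log S.p - γ * Real.log S.ρ

/-- total energy density ρe -/
def rhoE (γ : ℝ) (S : MHD) : ℝ := S.p / (γ - 1) + S.ρ * S.uSq / 2 + S.BSq / 2

/-- entropy density U = −ρs/(γ−1) -/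
def entU (γ : ℝ) (S : MHD) : ℝ := -(S.ρ * S.ent γ) / (γ - 1)

/-- x-direction entropy flux F = uU -/
def entF (γ : ℝ) (S : MHD) : ℝ := S.u * S.entU γ

/-- the entropy variables v⃗ = U_q -/
def entVar (γ : ℝ) (S : MHD) : Fin 8 → ℝ :=
  ![(γ - S.ent γ) / (γ - 1) - S.ρ * S.uSq / (2 * S.p),
    S.ρ * S.u / S.p, S.ρ * S.v / S.p, S.ρ * S.w / S.p,
    -(S.ρ / S.p), S.ρ * S.B1 / S.p, S.ρ * S.B2 / S.p, S.ρ * S.B3 / S.p]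

/-- x-direction physical flux f⃗ -/
def fluxX (γ : ℝ) (S : MHD) : Fin 8 → ℝ :=
  ![S.ρ * S.u,
    S.ρ * S.u ^ 2 + S.p + S.BSq / 2 - S.B1 ^ 2,
    S.ρ * S.u * S.v - S.B1 * S.B2,
    S.ρ * S.u * S.w - S.B1 * S.B3,
    S.u * (S.rhoE γ + S.p + S.BSq / 2) - S.B1 * S.uDotB,
    0,
    S.u * S.B2 - S.v * S.B1,
    S.u * S.B3 - S.w * S.B1]

/-- the parameter vector z -/
def z (S : MHD) : Fin 8 → ℝ :=
  ![Real.sqrt (S.ρ / S.p), Real.sqrt (S.ρ / S.p) * S.u, Real.sqrt (S.ρ / S.p) * S.v,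
    Real.sqrt (S.ρ / S.p) * S.w, Real.sqrt (S.ρ * S.p), S.B1, S.B2, S.B3]

end

end MHD

noncomputable section

open MHD

/-- logarithmic mean: (x−y)/(ln x − ln y), with the consistent value x when x = y. -/
def lm (x y : ℝ) : ℝ := if x = y then x else (x - y) / (Real.log x - Real.log y)

/-- arithmetic mean -/
def am (x y : ℝ) : ℝ := (x + y) / 2

/-- ⟨z_i⟩ (note: `zA L R 0` is ⟨z₁⟩, …, `zA L R 7` is ⟨z₈⟩) -/
def zA (L R : MHD) (i : Fin 8) : ℝ := am (L.z i) (R.z i)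

/-- ⟨z_i z_j⟩ -/
def zP (L R : MHD) (i j : Fin 8) : ℝ := am (L.z i * L.z j) (R.z i * R.z j)

/-- ⟨z₁z₂⟩⟨z₆⟩ + ⟨z₁z₃⟩⟨z₇⟩ + ⟨z₁z₄⟩⟨z₈⟩, the x-direction source factor -/
def srcX (L R : MHD) : ℝ :=
  zP L R 0 1 * zA L R 5 + zP L R 0 2 * zA L R 6 + zP L R 0 3 * zA L R 7

/-- the entropy conserving numerical flux of Theorem 1 (x-direction) -/
def ecFlux (γ : ℝ) (L R : MHD) : Fin 8 → ℝ :=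
  ![zA L R 1 * lm (L.z 4) (R.z 4),
    zA L R 4 / zA L R 0 + (zA L R 1) ^ 2 * lm (L.z 4) (R.z 4) / zA L R 0
      + (zP L R 5 5 + zP L R 6 6 + zP L R 7 7) / 2 - zP L R 5 5,
    zA L R 1 * zA L R 2 * lm (L.z 4) (R.z 4) / zA L R 0 - zP L R 5 6,
    zA L R 1 * zA L R 3 * lm (L.z 4) (R.z 4) / zA L R 0 - zP L R 5 7,
    (γ / (γ - 1)) * (zA L R 1 / zA L R 0) *
        (((γ + 1) / (2 * γ)) * lm (L.z 4) (R.z 4) / lm (L.z 0) (R.z 0)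
          + ((γ - 1) / (2 * γ)) * (zA L R 4 / zA L R 0))
      + zA L R 1 * lm (L.z 4) (R.z 4) / 2 *
          ((zA L R 1) ^ 2 + (zA L R 2) ^ 2 + (zA L R 3) ^ 2) / (zA L R 0) ^ 2
      + (zA L R 6 / zP L R 0 0) * (zP L R 0 1 * zA L R 6 - zP L R 0 2 * zA L R 5)
      + (zA L R 7 / zP L R 0 0) * (zP L R 0 1 * zA L R 7 - zP L R 0 3 * zA L R 5),
    0,
    (zP L R 0 1 * zA L R 6 - zP L R 0 2 * zA L R 5) / zP L R 0 0,
    (zP L R 0 1 * zA L R 7 - zP L R 0 3 * zA L R 5) / zP L R 0 0]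

end

namespace MHD

noncomputable section

/-- Ĥ = a²/(γ−1) + ‖u⃗‖²/2 with a² = γp/ρ -/
def Hh (γ : ℝ) (S : MHD) : ℝ := (γ * S.p / S.ρ) / (γ - 1) + S.uSq / 2

/-- the entropy Jacobian matrix H -/
def Hmat (γ : ℝ) (S : MHD) : Matrix (Fin 8) (Fin 8) ℝ :=
  Matrix.of
    ![![S.ρ, S.ρ * S.u, S.ρ * S.v, S.ρ * S.w, S.rhoE γ - S.BSq / 2, 0, 0, 0],
      ![S.ρ * S.u, S.ρ * S.u ^ 2 + S.p, S.ρ * S.u * S.v, S.ρ * S.u * S.w,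
        S.ρ * S.Hh γ * S.u, 0, 0, 0],
      ![S.ρ * S.v, S.ρ * S.u * S.v, S.ρ * S.v ^ 2 + S.p, S.ρ * S.v * S.w,
        S.ρ * S.Hh γ * S.v, 0, 0, 0],
      ![S.ρ * S.w, S.ρ * S.u * S.w, S.ρ * S.v * S.w, S.ρ * S.w ^ 2 + S.p,
        S.ρ * S.Hh γ * S.w, 0, 0, 0],
      ![S.rhoE γ - S.BSq / 2, S.ρ * S.Hh γ * S.u, S.ρ * S.Hh γ * S.v, S.ρ * S.Hh γ * S.w,
        S.ρ * (S.Hh γ) ^ 2 - (γ * S.p / S.ρ) * S.p / (γ - 1) + (γ * S.p / S.ρ) * S.BSq / γ,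
        S.p * S.B1 / S.ρ, S.p * S.B2 / S.ρ, S.p * S.B3 / S.ρ],
      ![0, 0, 0, 0, S.p * S.B1 / S.ρ, S.p / S.ρ, 0, 0],
      ![0, 0, 0, 0, S.p * S.B2 / S.ρ, 0, S.p / S.ρ, 0],
      ![0, 0, 0, 0, S.p * S.B3 / S.ρ, 0, 0, S.p / S.ρ]]

end

end MHD


section Vec8Aux
variable {α : Type*} (a0 a1 a2 a3 a4 a5 a6 a7 : α)
lemma vec8_at0 : ![a0,a1,a2,a3,a4,a5,a6,a7] (0 : Fin 8) = a0 := rfl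
lemma vec8_at1 : ![a0,a1,a2,a3,a4,a5,a6,a7] (1 : Fin 8) = a1 := rfl
lemma vec8_at2 : ![a0,a1,a2,a3,a4,a5,a6,a7] (2 : Fin 8) = a2 := rfl
lemma vec8_at3 : ![a0,a1,a2,a3,a4,a5,a6,a7] (3 : Fin 8) = a3 := rfl
lemma vec8_at4 : ![a0,a1,a2,a3,a4,a5,a6,a7] (4 : Fin 8) = a4 := rfl
lemma vec8_at5 : ![a0,a1,a2,a3,a4,a5,a6,a7] (5 : Fin 8) = a5 := rfl
lemma vec8_at6 : ![a0,a1,a2,a3,a4,a5,a6,a7] (6 : Fin 8) = a6 := rfl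
lemma vec8_at7 : ![a0,a1,a2,a3,a4,a5,a6,a7] (7 : Fin 8) = a7 := rfl
end Vec8Aux

set_option maxHeartbeats 2000000 in
open MHD Matrix in
/-- the entropy Jacobian H of the ideal MHD system is symmetric positive
definite: H is symmetric and xᵀHx > 0 for every nonzero x ∈ ℝ⁸. -/
theorem entropy_jacobian_posdef (γ : ℝ) (hγ : 1 < γ) (S : MHD) (hρ : 0 < S.ρ)
    (hp : 0 < S.p) :
    (Hmat γ S).IsSymm ∧
      ∀ x : Fin 8 → ℝ, x ≠ 0 → 0 < dotProduct x ((Hmat γ S).mulVec x) := by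
  have hρ' : S.ρ ≠ 0 := ne_of_gt hρ
  have hγ1 : (0:ℝ) < γ - 1 := by linarith
  have hγ1' : γ - 1 ≠ 0 := ne_of_gt hγ1
  constructor
  · ext i j
    fin_cases i <;> fin_cases j <;> rfl
  · intro x hx
    set E : ℝ := S.p / (γ - 1) + S.ρ * S.uSq / 2 with hE
    have key : dotProduct x ((Hmat γ S).mulVec x) =
        S.ρ * (x 0 + S.u * x 1 + S.v * x 2 + S.w * x 3 + (E / S.ρ) * x 4) ^ 2
        + S.p * ((x 1 + S.u * x 4) ^ 2 + (x 2 + S.v * x 4) ^ 2 + (x 3 + S.w * x 4) ^ 2)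
        + (S.p ^ 2 / (S.ρ * (γ - 1))) * x 4 ^ 2
        + (S.p / S.ρ) * ((x 5 + S.B1 * x 4) ^ 2 + (x 6 + S.B2 * x 4) ^ 2
            + (x 7 + S.B3 * x 4) ^ 2) := by
      simp only [dotProduct, Matrix.mulVec, Hmat, Matrix.of_apply,
        Fin.sum_univ_eight, vec8_at0, vec8_at1, vec8_at2, vec8_at3, vec8_at4,
        vec8_at5, vec8_at6, vec8_at7, hE, rhoE, Hh, uSq, BSq]
      field_simp
      ring
    have h1 : 0 ≤ S.ρ * (x 0 + S.u * x 1 + S.v * x 2 + S.w * x 3 + (E / S.ρ) * x 4) ^ 2 :=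
      mul_nonneg hρ.le (sq_nonneg _)
    have h2 : 0 ≤ S.p * ((x 1 + S.u * x 4) ^ 2 + (x 2 + S.v * x 4) ^ 2
        + (x 3 + S.w * x 4) ^ 2) := by positivity
    have h3 : 0 ≤ (S.p ^ 2 / (S.ρ * (γ - 1))) * x 4 ^ 2 := by positivity
    have h4 : 0 ≤ (S.p / S.ρ) * ((x 5 + S.B1 * x 4) ^ 2 + (x 6 + S.B2 * x 4) ^ 2
        + (x 7 + S.B3 * x 4) ^ 2) := by positivity
    rw [key]
    rcases (add_nonneg (add_nonneg (add_nonneg h1 h2) h3) h4).eq_or_lt with h | h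
    swap
    · exact h
    exfalso
    apply hx
    have e1 : S.ρ * (x 0 + S.u * x 1 + S.v * x 2 + S.w * x 3 + (E / S.ρ) * x 4) ^ 2 = 0 := by
      linarith
    have e2 : S.p * ((x 1 + S.u * x 4) ^ 2 + (x 2 + S.v * x 4) ^ 2 + (x 3 + S.w * x 4) ^ 2)
        = 0 := by linarith
    have e3 : (S.p ^ 2 / (S.ρ * (γ - 1))) * x 4 ^ 2 = 0 := by linarith
    have e4 : (S.p / S.ρ) * ((x 5 + S.B1 * x 4) ^ 2 + (x 6 + S.B2 * x 4) ^ 2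
        + (x 7 + S.B3 * x 4) ^ 2) = 0 := by linarith
    have hc3 : (0:ℝ) < S.p ^ 2 / (S.ρ * (γ - 1)) := by positivity
    have hx4 : x 4 = 0 := by
      have := (mul_eq_zero.mp e3).resolve_left (ne_of_gt hc3)
      exact pow_eq_zero_iff (n := 2) (by norm_num) |>.mp this
    have hsq2 : (x 1 + S.u * x 4) ^ 2 + (x 2 + S.v * x 4) ^ 2 + (x 3 + S.w * x 4) ^ 2 = 0 :=
      (mul_eq_zero.mp e2).resolve_left (ne_of_gt hp)
    rw [hx4] at hsq2
    have h123 : x 1 ^ 2 + x 2 ^ 2 + x 3 ^ 2 = 0 := by linear_combination hsq2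
    have hx1 : x 1 = 0 := by
      have : x 1 ^ 2 = 0 := by
        linarith [sq_nonneg (x 1), sq_nonneg (x 2), sq_nonneg (x 3)]
      exact pow_eq_zero_iff (n := 2) (by norm_num) |>.mp this
    have hx2 : x 2 = 0 := by
      have : x 2 ^ 2 = 0 := by
        linarith [sq_nonneg (x 1), sq_nonneg (x 2), sq_nonneg (x 3)]
      exact pow_eq_zero_iff (n := 2) (by norm_num) |>.mp this
    have hx3 : x 3 = 0 := by
      have : x 3 ^ 2 = 0 := by
        linarith [sq_nonneg (x 1), sq_nonneg (x 2), sq_nonneg (x 3)]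
      exact pow_eq_zero_iff (n := 2) (by norm_num) |>.mp this
    have hsq4 : (x 5 + S.B1 * x 4) ^ 2 + (x 6 + S.B2 * x 4) ^ 2 + (x 7 + S.B3 * x 4) ^ 2 = 0 :=
      (mul_eq_zero.mp e4).resolve_left (by positivity)
    rw [hx4] at hsq4
    have h567 : x 5 ^ 2 + x 6 ^ 2 + x 7 ^ 2 = 0 := by linear_combination hsq4
    have hx5 : x 5 = 0 := by
      have : x 5 ^ 2 = 0 := by
        linarith [sq_nonneg (x 5), sq_nonneg (x 6), sq_nonneg (x 7)]
      exact pow_eq_zero_iff (n := 2) (by norm_num) |>.mp this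
    have hx6 : x 6 = 0 := by
      have : x 6 ^ 2 = 0 := by
        linarith [sq_nonneg (x 5), sq_nonneg (x 6), sq_nonneg (x 7)]
      exact pow_eq_zero_iff (n := 2) (by norm_num) |>.mp this
    have hx7 : x 7 = 0 := by
      have : x 7 ^ 2 = 0 := by
        linarith [sq_nonneg (x 5), sq_nonneg (x 6), sq_nonneg (x 7)]
      exact pow_eq_zero_iff (n := 2) (by norm_num) |>.mp this
    have hx0 : x 0 = 0 := by
      have hsq1 : (x 0 + S.u * x 1 + S.v * x 2 + S.w * x 3 + (E / S.ρ) * x 4) ^ 2 = 0 :=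
        (mul_eq_zero.mp e1).resolve_left hρ'
      have hz := pow_eq_zero_iff (n := 2) (by norm_num) |>.mp hsq1
      linear_combination hz - S.u * hx1 - S.v * hx2 - S.w * hx3 - (E / S.ρ) * hx4
    funext i
    fin_cases i <;> simp [hx0, hx1, hx2, hx3, hx4, hx5, hx6, hx7]
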